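/- arXiv:1503.08078 — 3 statements merged into one kernel-verified Lean document; each statement's English description precedes it below -/
import Mathlib

section
/- For a symmetric cost function on column placements satisfying the triangle inequality, moving a duplicate column next to its copy does not increase total cost: if bd is a symmetric function on column types satisfying bd(u,w) ≤ bd(u,v) + bd(v,w) and bd(v,v) = 0, then for a sequence of columns c_1,...,c_m with c_a = c_b (a+1 < b), the sequence obtained by moving c_b to position a+1 has total consecutive cost ∑ bd(c'_i, c'_{i+1}) at most the original ∑ bd(c_i, c_{i+1}). -/
/-- The total consecutive cost `∑ bd(c_i, c_{i+1})` of a sequence of column types. -/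
def cost {T : Type*} (bd : T → T → ℕ) : List T → ℕ
  | x :: y :: rest => bd x y + cost bd (y :: rest)
  | _ => 0

theorem cost_cons_cons {T : Type*} (bd : T → T → ℕ) (x y : T) (l : List T) :
    cost bd (x :: y :: l) = bd x y + cost bd (y :: l) := rfl

/-- Inserting an element never decreases cost. -/
theorem costA {T : Type*} (bd : T → T → ℕ)
    (htri : ∀ x y z, bd x z ≤ bd x y + bd y z) (x : T) :
    ∀ (M S : List T), cost bd (M ++ S) ≤ cost bd (M ++ x :: S)
  | [], [] => by simp [cost]
  | [], s :: S => by simp [cost]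
  | [m], [] => by simp [cost]
  | [m], s :: S => by
      simp only [List.cons_append, List.nil_append, cost_cons_cons]
      exact (Nat.add_le_add_right (htri m x s) _).trans_eq (by ring)
  | m1 :: m2 :: M, S => by
      simp only [List.cons_append, cost_cons_cons]
      exact Nat.add_le_add_left (costA bd htri x (m2 :: M) S) _

theorem costC {T : Type*} (bd : T → T → ℕ) :
    ∀ (P : List T) (y : T) (L1 L2 : List T),
    cost bd (y :: L1) ≤ cost bd (y :: L2) →
    cost bd (P ++ y :: L1) ≤ cost bd (P ++ y :: L2)
  | [], y, L1, L2, h => h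
  | [p], y, L1, L2, h => by
      simpa [cost_cons_cons] using Nat.add_le_add_left h (bd p y)
  | p1 :: p2 :: P, y, L1, L2, h => by
      simp only [List.cons_append, cost_cons_cons]
      exact Nat.add_le_add_left (costC bd (p2 :: P) y L1 L2 h) _

theorem costKey {T : Type*} (bd : T → T → ℕ)
    (hzero : ∀ x, bd x x = 0)
    (htri : ∀ x y z, bd x z ≤ bd x y + bd y z)
    (P M S : List T) (x : T) :
    cost bd ((P ++ [x]) ++ [x] ++ (M ++ S)) ≤ cost bd ((P ++ [x]) ++ (M ++ x :: S)) := by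
  have e1 : (P ++ [x]) ++ [x] ++ (M ++ S) = P ++ x :: (x :: (M ++ S)) := by simp
  have e2 : (P ++ [x]) ++ (M ++ x :: S) = P ++ x :: (M ++ x :: S) := by simp
  rw [e1, e2]
  apply costC
  cases M with
  | nil => simp
  | cons m M' =>
    simp only [List.cons_append, cost_cons_cons, hzero x, Nat.zero_add]
    exact Nat.add_le_add_left (costA bd htri x (m :: M') S) _

/-- For a symmetric cost `bd` with `bd(x,x) = 0` satisfying the triangle
inequality, moving a duplicate column next to its copy does not increase the
total consecutive cost: if `c_a = c_b` with `a+1 < b`, then the sequence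
`(c_1, ..., c_a, c_b, c_{a+1}, ..., c_{b−1}, c_{b+1}, ..., c_m)` has total
consecutive cost at most that of `(c_1, ..., c_m)`. -/
theorem stmt_6 {T : Type*} (bd : T → T → ℕ)
    (hsym : ∀ x y, bd x y = bd y x)
    (hzero : ∀ x, bd x x = 0)
    (htri : ∀ x y z, bd x z ≤ bd x y + bd y z)
    (l : List T) (a b : ℕ) (hab : a + 1 < b) (hbl : b < l.length)
    (heq : l[a]'(by omega) = l[b]'hbl) :
    cost bd (l.take (a + 1) ++ [l[b]'hbl] ++ (l.drop (a + 1)).eraseIdx (b - (a + 1)))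
      ≤ cost bd l := by
  have hkD : b - (a + 1) < (l.drop (a + 1)).length := by
    rw [List.length_drop]; omega
  have hDk : (l.drop (a + 1))[b - (a + 1)]'hkD = l[b]'hbl := by
    rw [List.getElem_drop]
    congr 1
    omega
  have h1 : l.take (a + 1) = l.take a ++ [l[b]'hbl] := by
    rw [← List.take_concat_get (by omega : a < l.length)]
    simp [List.concat_eq_append, heq]
  have h2 : (l.drop (a + 1)).eraseIdx (b - (a + 1)) =
      (l.drop (a + 1)).take (b - (a + 1)) ++ (l.drop (a + 1)).drop (b - (a + 1) + 1) :=
    List.eraseIdx_eq_take_drop_succ _ _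
  have h3 : l = (l.take a ++ [l[b]'hbl]) ++
      ((l.drop (a + 1)).take (b - (a + 1)) ++ l[b]'hbl :: (l.drop (a + 1)).drop (b - (a + 1) + 1)) := by
    conv_lhs => rw [← List.take_append_drop (a + 1) l, h1,
      ← List.take_append_drop (b - (a + 1)) (l.drop (a + 1)),
      List.drop_eq_getElem_cons hkD, hDk]
  rw [h1, h2]
  conv_rhs => rw [h3]
  exact costKey bd hzero htri _ _ _ _
end

section
/- Any finite sequence over a set T equipped with a symmetric cost bd satisfying the triangle inequality and bd(x,x)=0 can be rearranged (as a permutation of its entries) into a 'consecutive' sequence—one in which equal entries occupy contiguous blocks—without increasing the total consecutive cost ∑ bd(c_i, c_{i+1}). -/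
namespace Stmt7Aux

variable {T : Type*}

/-- Lists that are concatenations of constant blocks with no later reuse. -/
inductive Grp : List T → Prop
  | nil : Grp []
  | cons (a : T) (n : ℕ) (r : List T) : a ∉ r → Grp r →
      Grp (List.replicate (n + 1) a ++ r)

lemma cost_cons (bd : T → T → ℕ) (x y : T) (l : List T) :
    cost bd (x :: y :: l) = bd x y + cost bd (y :: l) := rfl

lemma cost_drop (bd : T → T → ℕ) (htri : ∀ x y z, bd x z ≤ bd x y + bd y z)
    (a : T) : ∀ (u : List T) (b : T) (v : List T),
    cost bd (b :: (u ++ v)) ≤ cost bd (b :: (u ++ a :: v)) := by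
  intro u
  induction u with
  | nil =>
    intro b v
    cases v with
    | nil => simp [cost]
    | cons c v' =>
      simp only [List.nil_append, cost_cons]
      calc bd b c + cost bd (c :: v') ≤ (bd b a + bd a c) + cost bd (c :: v') := by
            exact Nat.add_le_add_right (htri b a c) _
        _ = bd b a + (bd a c + cost bd (c :: v')) := by ring
  | cons d u' ih =>
    intro b v
    simp only [List.cons_append, cost_cons]
    exact Nat.add_le_add_left (ih d v) _

lemma cost_move (bd : T → T → ℕ) (hzero : ∀ x, bd x x = 0)
    (htri : ∀ x y z, bd x z ≤ bd x y + bd y z)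
    (a : T) (u v : List T) :
    cost bd (a :: a :: (u ++ v)) ≤ cost bd (a :: (u ++ a :: v)) := by
  cases u with
  | nil => simp [cost_cons, hzero]
  | cons b u' =>
    simp only [List.cons_append, cost_cons, hzero, Nat.zero_add]
    exact Nat.add_le_add_left (cost_drop bd htri a u' b v) _

lemma cost_cons_replicate (bd : T → T → ℕ) (hzero : ∀ x, bd x x = 0)
    (a : T) : ∀ (n : ℕ) (r : List T),
    cost bd (a :: (List.replicate n a ++ r)) = cost bd (a :: r) := by
  intro n
  induction n with
  | zero => simp
  | succ m ih =>
    intro r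
    have : a :: (List.replicate (m + 1) a ++ r)
        = a :: a :: (List.replicate m a ++ r) := by
      simp [List.replicate_succ]
    rw [this, cost_cons, hzero, Nat.zero_add, ih]

/-- All occurrences of `a` in `l` can be pulled to the front (just after a
leading `a`) without increasing cost. -/
lemma pull (bd : T → T → ℕ) (hzero : ∀ x, bd x x = 0)
    (htri : ∀ x y z, bd x z ≤ bd x y + bd y z) :
    ∀ (N : ℕ) (l : List T), l.length ≤ N → ∀ a : T,
    ∃ (n : ℕ) (r : List T), a ∉ r ∧ (List.replicate n a ++ r).Perm l ∧
      cost bd (a :: (List.replicate n a ++ r)) ≤ cost bd (a :: l) := by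
  intro N
  induction N with
  | zero =>
    intro l hl a
    have : l = [] := List.eq_nil_of_length_eq_zero (Nat.le_zero.mp hl)
    subst this
    exact ⟨0, [], by simp, by simp, le_refl _⟩
  | succ N ih =>
    intro l hl a
    by_cases ha : a ∈ l
    · obtain ⟨u, v, rfl⟩ := List.append_of_mem ha
      have hlen : (u ++ v).length ≤ N := by
        simp only [List.length_append, List.length_cons] at hl ⊢
        omega
      obtain ⟨n, r, har, hperm, hcost⟩ := ih (u ++ v) hlen a
      refine ⟨n + 1, r, har, ?_, ?_⟩
      · have e : List.replicate (n + 1) a ++ r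
            = a :: (List.replicate n a ++ r) := by simp [List.replicate_succ]
        rw [e]
        exact (hperm.cons a).trans List.perm_middle.symm
      · have h1 : cost bd (a :: (List.replicate (n + 1) a ++ r))
            = cost bd (a :: (List.replicate n a ++ r)) := by
          rw [cost_cons_replicate bd hzero, cost_cons_replicate bd hzero]
        have h2 : cost bd (a :: (u ++ v)) = cost bd (a :: a :: (u ++ v)) := by
          rw [cost_cons, hzero, Nat.zero_add]
        calc cost bd (a :: (List.replicate (n + 1) a ++ r))
            = cost bd (a :: (List.replicate n a ++ r)) := h1
          _ ≤ cost bd (a :: (u ++ v)) := hcost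
          _ = cost bd (a :: a :: (u ++ v)) := h2
          _ ≤ cost bd (a :: (u ++ a :: v)) := cost_move bd hzero htri a u v
    · exact ⟨0, l, ha, by simp, le_refl _⟩

/-- Main structural lemma: any list can be permuted into a grouped list with
the same head and no larger cost. -/
lemma main (bd : T → T → ℕ) (hzero : ∀ x, bd x x = 0)
    (htri : ∀ x y z, bd x z ≤ bd x y + bd y z) :
    ∀ (N : ℕ) (l : List T), l.length ≤ N →
    ∃ l' : List T, l'.Perm l ∧ Grp l' ∧ l'.head? = l.head? ∧
      cost bd l' ≤ cost bd l := by
  intro N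
  induction N with
  | zero =>
    intro l hl
    have : l = [] := List.eq_nil_of_length_eq_zero (Nat.le_zero.mp hl)
    subst this
    exact ⟨[], List.Perm.refl _, Grp.nil, rfl, le_refl _⟩
  | succ N ih =>
    intro l hl
    cases l with
    | nil => exact ⟨[], List.Perm.refl _, Grp.nil, rfl, le_refl _⟩
    | cons a t =>
      have ht : t.length ≤ N := by
        simp only [List.length_cons] at hl; omega
      obtain ⟨n, r, har, hperm, hcost⟩ :=
        pull bd hzero htri N t ht a
      have hrlen : r.length ≤ N := by
        have := hperm.length_eq
        simp only [List.length_append, List.length_replicate] at this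
        omega
      obtain ⟨r'', hperm'', hgrp'', hhead'', hcost''⟩ := ih r hrlen
      refine ⟨List.replicate (n + 1) a ++ r'', ?_, ?_, ?_, ?_⟩
      · have e : List.replicate (n + 1) a ++ r''
            = a :: (List.replicate n a ++ r'') := by simp [List.replicate_succ]
        rw [e]
        exact ((((List.Perm.refl (List.replicate n a)).append hperm'').trans
          hperm).cons a)
      · exact Grp.cons a n r''
          (fun h => har (hperm''.mem_iff.mp h)) hgrp''
      · simp [List.replicate_succ]
      · have e1 : cost bd (List.replicate (n + 1) a ++ r'')
            = cost bd (a :: r'') := by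
          simpa [List.replicate_succ] using cost_cons_replicate bd hzero a n r''
        have e2 : cost bd (a :: r) = cost bd (a :: (List.replicate n a ++ r)) :=
          (cost_cons_replicate bd hzero a n r).symm
        have h3 : cost bd (a :: r'') ≤ cost bd (a :: r) := by
          cases r with
          | nil =>
            have : r'' = [] := hperm''.eq_nil
            subst this; exact le_refl _
          | cons h w =>
            cases r'' with
            | nil =>
              exact absurd hperm''.symm.length_eq (by simp)
            | cons h' w' =>
              have : h' = h := by simpa using hhead''
              subst this
              rw [cost_cons, cost_cons]
              exact Nat.add_le_add_left hcost'' _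
        calc cost bd (List.replicate (n + 1) a ++ r'')
            = cost bd (a :: r'') := e1
          _ ≤ cost bd (a :: r) := h3
          _ = cost bd (a :: (List.replicate n a ++ r)) := e2
          _ ≤ cost bd (a :: t) := hcost

/-- A grouped list satisfies the index-based consecutiveness condition. -/
lemma grp_consecutive {l : List T} (hl : Grp l) :
    ∀ (i j k : ℕ) (_hij : i < j) (_hjk : j < k) (hk : k < l.length),
      l[i]'(Nat.lt_trans (Nat.lt_trans _hij _hjk) hk) = l[k]'hk →
        l[i]'(Nat.lt_trans (Nat.lt_trans _hij _hjk) hk) = l[j]'(Nat.lt_trans _hjk hk) := by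
  induction hl with
  | nil => intro i j k _ _ hk; simp at hk
  | cons a n r har hr ihr =>
    intro i j k hij hjk hk hik
    set m := n + 1 with hm
    have hlen : (List.replicate m a ++ r).length = m + r.length := by simp
    have hget : ∀ (x : ℕ) (hx : x < (List.replicate m a ++ r).length),
        (List.replicate m a ++ r)[x]'hx
          = if h : x < m then a else r[x - m]'(by simp at hx; omega) := by
      intro x hx
      by_cases h : x < m
      · rw [dif_pos h, List.getElem_append_left (by simpa using h)]
        simp
      · rw [dif_neg h]
        rw [List.getElem_append_right (by simpa using h)]
        simp
    have hki : i < (List.replicate m a ++ r).length := by omega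
    have hkj : j < (List.replicate m a ++ r).length := by omega
    rw [hget i hki, hget j hkj]
    rw [hget i hki, hget k hk] at hik
    by_cases hkm : k < m
    · rw [dif_pos (by omega), dif_pos (by omega)]
    · by_cases him : i < m
      · -- l[i] = a, l[k] ∈ r : contradiction
        rw [dif_pos him, dif_neg hkm] at hik
        exact absurd (hik ▸ List.getElem_mem _) har
      · rw [dif_neg him, dif_neg (by omega)]
        rw [dif_neg him, dif_neg hkm] at hik
        exact ihr (i - m) (j - m) (k - m) (by omega) (by omega)
          (by simp at hk; omega) hik

end Stmt7Aux

/-- Any finite sequence over `T` with a symmetric cost `bd` satisfying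
`bd(x,x) = 0` and the triangle inequality can be permuted into a consecutive
sequence (equal entries occupy contiguous blocks) without increasing the total
consecutive cost. -/
theorem stmt_7 {T : Type*} (bd : T → T → ℕ)
    (hsym : ∀ x y, bd x y = bd y x)
    (hzero : ∀ x, bd x x = 0)
    (htri : ∀ x y z, bd x z ≤ bd x y + bd y z)
    (l : List T) :
    ∃ l' : List T, l'.Perm l ∧
      (∀ (i j k : ℕ) (hij : i < j) (hjk : j < k) (hk : k < l'.length),
        l'[i]'(by omega) = l'[k]'hk → l'[i]'(by omega) = l'[j]'(by omega)) ∧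
      cost bd l' ≤ cost bd l := by
  obtain ⟨l', hperm, hgrp, _, hcost⟩ :=
    Stmt7Aux.main bd hzero htri l.length l (le_refl _)
  exact ⟨l', hperm, fun i j k hij hjk hk =>
    Stmt7Aux.grp_consecutive hgrp i j k hij hjk hk, hcost⟩
end

section
/- In an r × m grid (r, m ≥ 2), a placement of the distinct labels {(i,j) : i ∈ [r], j ∈ [m]} onto the cells such that every pair of neighboring cells receives labels at Manhattan distance exactly 1 must be one of the 8 (or fewer) grid symmetries composed with the identity labeling; in particular, if additionally the labels of two adjacent corners are fixed to their identity positions, the placement is the identity. -/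
/-- Two cells of an `r × m` array are neighbors iff their Manhattan distance is `1`. -/
abbrev adj {r m : ℕ} (u v : Fin r × Fin m) : Prop :=
  Nat.dist (u.1 : ℕ) (v.1 : ℕ) + Nat.dist (u.2 : ℕ) (v.2 : ℕ) = 1

/-- Manhattan distance on the grid. -/
def mdist {r m : ℕ} (u v : Fin r × Fin m) : ℕ :=
  Nat.dist (u.1 : ℕ) (v.1 : ℕ) + Nat.dist (u.2 : ℕ) (v.2 : ℕ)

theorem mdist_lipschitz {r m : ℕ} (σ : (Fin r × Fin m) ≃ (Fin r × Fin m))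
    (hadj : ∀ u v : Fin r × Fin m, adj u v → adj (σ u) (σ v)) :
    ∀ n (u v : Fin r × Fin m), mdist u v = n → mdist (σ u) (σ v) ≤ n := by
  intro n
  induction n using Nat.strong_induction_on with
  | _ n ih =>
    intro u v h
    match n, h with
    | 0, h =>
      have h1 : (u.1 : ℕ) = v.1 ∧ (u.2 : ℕ) = v.2 := by
        simp only [mdist, Nat.dist] at h; omega
      have : u = v := by
        obtain ⟨h1, h2⟩ := h1
        exact Prod.ext (Fin.ext h1) (Fin.ext h2)
      simp [this, mdist, Nat.dist]
    | 1, h => exact le_of_eq (hadj u v h)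
    | (k+2), h =>
      -- find w adjacent to v with mdist u w = k+1
      obtain ⟨w, hwv, huw⟩ : ∃ w : Fin r × Fin m, adj w v ∧ mdist u w = k + 1 := by
        rcases eq_or_ne (u.1 : ℕ) (v.1 : ℕ) with h1 | h1
        · -- move second coordinate
          have h2 : (u.2 : ℕ) ≠ (v.2 : ℕ) := by
            simp only [mdist, Nat.dist] at h; omega
          by_cases hlt : (u.2 : ℕ) < (v.2 : ℕ)
          · refine ⟨(v.1, ⟨(v.2 : ℕ) - 1, by omega⟩), ?_, ?_⟩ <;>
              simp only [adj, mdist, Nat.dist] at * <;> omega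
          · refine ⟨(v.1, ⟨(v.2 : ℕ) + 1, by omega⟩), ?_, ?_⟩ <;>
              simp only [adj, mdist, Nat.dist] at * <;> omega
        · by_cases hlt : (u.1 : ℕ) < (v.1 : ℕ)
          · refine ⟨(⟨(v.1 : ℕ) - 1, by omega⟩, v.2), ?_, ?_⟩ <;>
              simp only [adj, mdist, Nat.dist] at * <;> omega
          · refine ⟨(⟨(v.1 : ℕ) + 1, by omega⟩, v.2), ?_, ?_⟩ <;>
              simp only [adj, mdist, Nat.dist] at * <;> omega
      have h1 : mdist (σ u) (σ w) ≤ k + 1 := ih (k+1) (by omega) u w huw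
      have h2 : mdist (σ w) (σ v) = 1 := hadj w v hwv
      have htri : mdist (σ u) (σ v) ≤ mdist (σ u) (σ w) + mdist (σ w) (σ v) := by
        simp only [mdist, Nat.dist]; omega
      omega

theorem mdist_isometry {r m : ℕ} (σ : (Fin r × Fin m) ≃ (Fin r × Fin m))
    (hadj : ∀ u v : Fin r × Fin m, adj u v → adj (σ u) (σ v)) :
    ∀ u v : Fin r × Fin m, mdist (σ u) (σ v) = mdist u v := by
  have hle : ∀ p : (Fin r × Fin m) × (Fin r × Fin m),
      mdist (σ p.1) (σ p.2) ≤ mdist p.1 p.2 :=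
    fun p => mdist_lipschitz σ hadj _ p.1 p.2 rfl
  have hsum : ∑ p : (Fin r × Fin m) × (Fin r × Fin m), mdist (σ p.1) (σ p.2)
      = ∑ p : (Fin r × Fin m) × (Fin r × Fin m), mdist p.1 p.2 :=
    Fintype.sum_equiv (Equiv.prodCongr σ σ) _ _ (fun p => rfl)
  intro u v
  by_contra hne
  have hlt : mdist (σ u) (σ v) < mdist u v := lt_of_le_of_ne (hle (u, v)) hne
  have : ∑ p : (Fin r × Fin m) × (Fin r × Fin m), mdist (σ p.1) (σ p.2)
      < ∑ p : (Fin r × Fin m) × (Fin r × Fin m), mdist p.1 p.2 :=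
    Finset.sum_lt_sum (fun p _ => hle p) ⟨(u, v), Finset.mem_univ _, hlt⟩
  omega

/-- A bijection of the cells of an `r × m` grid (`r, m ≥ 2`) that maps
neighboring cells to neighboring cells is a grid symmetry; in particular, if it
fixes the two adjacent corners `(1,1)` and `(1,m)`, it is the identity. -/
theorem stmt_19 (r m : ℕ) (hr : 2 ≤ r) (hm : 2 ≤ m)
    (σ : (Fin r × Fin m) ≃ (Fin r × Fin m))
    (hadj : ∀ u v : Fin r × Fin m, adj u v → adj (σ u) (σ v))
    (hc1 : σ (⟨0, by omega⟩, ⟨0, by omega⟩) = (⟨0, by omega⟩, ⟨0, by omega⟩))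
    (hc2 : σ (⟨0, by omega⟩, ⟨m - 1, by omega⟩) = (⟨0, by omega⟩, ⟨m - 1, by omega⟩)) :
    σ = Equiv.refl (Fin r × Fin m) := by
  have hiso := mdist_isometry σ hadj
  apply Equiv.ext
  intro u
  have h1 := hiso u (⟨0, by omega⟩, ⟨0, by omega⟩)
  have h2 := hiso u (⟨0, by omega⟩, ⟨m - 1, by omega⟩)
  rw [hc1] at h1
  rw [hc2] at h2
  have hb1 : ((σ u).1 : ℕ) < r := (σ u).1.isLt
  have hb2 : ((σ u).2 : ℕ) < m := (σ u).2.isLt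
  have hb3 : (u.1 : ℕ) < r := u.1.isLt
  have hb4 : (u.2 : ℕ) < m := u.2.isLt
  simp only [mdist, Nat.dist] at h1 h2
  have e1 : ((σ u).1 : ℕ) = (u.1 : ℕ) := by omega
  have e2 : ((σ u).2 : ℕ) = (u.2 : ℕ) := by omega
  simp only [Equiv.refl_apply]
  exact Prod.ext (Fin.ext e1) (Fin.ext e2)
end
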